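/- Let q ≥ 2 and f be strongly q-multiplicative with |f| = 1. Define c(f) = -log(max_t |F₁(t)F₁(qt)|)/(2 log q) and η(f) = (1/log q) log(max_{0≤t≤1} Σ_{0≤r<q} |F₁(qt+r)|), where F₁(t) = q^{-1} Σ_{0≤u<q} f(u) e(-tu/q). Then c(f) ≤ η(f). -/

import Mathlib

set_option maxHeartbeats 1000000

open Finset


/-- `F₁(t) = q^{-1} Σ_{0≤u<q} f(u) e(-tu/q)`. -/
noncomputable def F1 (q : ℕ) (f : ℕ → ℂ) (t : ℝ) : ℂ :=
  (1 / (q : ℂ)) * ∑ u ∈ Finset.range q,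
    f u * Complex.exp (2 * Real.pi * Complex.I * (-(t * u) / (q : ℝ)))

private lemma e_abs (x : ℝ) : ‖Complex.exp (2 * Real.pi * Complex.I * x)‖ = 1 := by
  have h : (2 * Real.pi * Complex.I * x) = ((2*Real.pi*x : ℝ):ℂ) * Complex.I := by
    push_cast; ring
  rw [h, Complex.norm_exp_ofReal_mul_I]

private lemma two_pi_I_ne : (2 * (Real.pi:ℂ) * Complex.I) ≠ 0 := by
  simp [Real.pi_ne_zero, Complex.I_ne_zero, Complex.ofReal_ne_zero]

private lemma orth (N : ℕ) (hN : 0 < N) (u v : ℕ) (hu : u < N) (hv : v < N) :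
    ∑ h ∈ Finset.range N,
      Complex.exp (2 * Real.pi * Complex.I * (((v : ℂ) - u) / N) * h)
      = if u = v then (N : ℂ) else 0 := by
  set z : ℂ := 2 * Real.pi * Complex.I * (((v : ℂ) - u) / N) with hz
  have hsum : ∀ h ∈ Finset.range N, Complex.exp (z * h) = (Complex.exp z) ^ h := by
    intro h _
    rw [mul_comm, Complex.exp_nat_mul]
  rw [Finset.sum_congr rfl hsum]
  have hNne : (N : ℂ) ≠ 0 := Nat.cast_ne_zero.mpr hN.ne'
  by_cases huv : u = v
  · subst huv
    simp [hz]
  · rw [if_neg huv]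
    have hzN : (Complex.exp z) ^ N = 1 := by
      rw [← Complex.exp_nat_mul]
      have : (N : ℂ) * z = ((v : ℤ) - u) * (2 * Real.pi * Complex.I) := by
        rw [hz]
        field_simp
        push_cast; ring
      rw [this]
      exact_mod_cast Complex.exp_int_mul_two_pi_mul_I ((v : ℤ) - u)
    have hz1 : Complex.exp z ≠ 1 := by
      intro h1
      rw [Complex.exp_eq_one_iff] at h1
      obtain ⟨n, hn⟩ := h1
      rw [hz] at hn
      have hpi : ((Real.pi:ℂ)) ≠ 0 := by exact_mod_cast Real.pi_ne_zero
      field_simp at hn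
      have h2' : (2 * (Real.pi:ℂ) * Complex.I) * ((v:ℂ)-u) = (2 * (Real.pi:ℂ) * Complex.I) * ((n:ℂ)*N) := by
        linear_combination (2 * (Real.pi:ℂ) * Complex.I) * hn
      have h2 : ((v : ℂ) - u) = n * N := mul_left_cancel₀ two_pi_I_ne h2'
      have h3 : (v : ℤ) - u = n * N := by exact_mod_cast h2
      have hvu : v ≠ u := fun h => huv h.symm
      have hnz : n ≠ 0 := by
        rintro rfl; simp at h3; omega
      have habs : |(v:ℤ) - u| < N := by rw [abs_sub_lt_iff]; omega
      have : (N:ℤ) ≤ |(v:ℤ) - u| := by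
        rw [h3, abs_mul, abs_of_nonneg (by positivity : (0:ℤ) ≤ (N:ℤ))]
        nlinarith [Int.one_le_abs hnz]
      omega
    rw [geom_sum_eq hz1, hzN]
    simp

private lemma conj_e (x : ℝ) : (starRingEnd ℂ) (Complex.exp (2 * Real.pi * Complex.I * (x:ℂ)))
    = Complex.exp (-(2 * Real.pi * Complex.I * (x:ℂ))) := by
  rw [← Complex.exp_conj]
  congr 1
  simp only [map_mul, Complex.conj_I, Complex.conj_ofReal, map_ofNat]
  ring

private lemma parseval (N : ℕ) (hN : 0 < N) (g : ℕ → ℂ) (hg : ∀ n, ‖g n‖ = 1) :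
    ∑ h ∈ Finset.range N, (‖(1/(N:ℂ)) * ∑ u ∈ Finset.range N,
      g u * Complex.exp (2 * Real.pi * Complex.I * ((-((h:ℝ) * u) / N : ℝ) : ℂ))‖)^2 = 1 := by
  have hNne : (N : ℂ) ≠ 0 := Nat.cast_ne_zero.mpr hN.ne'
  set F : ℕ → ℂ := fun h => (1/(N:ℂ)) * ∑ u ∈ Finset.range N,
      g u * Complex.exp (2 * Real.pi * Complex.I * ((-((h:ℝ) * u) / N : ℝ) : ℂ)) with hF
  have diag : ∀ u : ℕ, g u * (starRingEnd ℂ) (g u) = 1 := by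
    intro u
    rw [Complex.mul_conj, ← Complex.sq_norm, hg]
    norm_num
  have key : ∑ h ∈ Finset.range N, (F h * (starRingEnd ℂ) (F h)) = 1 := by
    have step1 : ∀ h : ℕ, F h * (starRingEnd ℂ) (F h)
        = (1/(N:ℂ)^2) * ∑ u ∈ Finset.range N, ∑ v ∈ Finset.range N,
            (g u * (starRingEnd ℂ) (g v)) *
              Complex.exp (2 * Real.pi * Complex.I * (((v : ℂ) - u) / N) * h) := by
      intro h
      rw [hF]
      simp only [map_mul, map_sum, conj_e]
      have hc1 : (starRingEnd ℂ) (1/(N:ℂ)) = 1/(N:ℂ)  := by simp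
      rw [hc1, mul_mul_mul_comm, Finset.sum_mul_sum]
      congr 1
      · field_simp
      refine Finset.sum_congr rfl fun u hu => Finset.sum_congr rfl fun v hv => ?_
      rw [mul_mul_mul_comm, ← Complex.exp_add]
      congr 2
      push_cast
      field_simp
      ring
    rw [Finset.sum_congr rfl (fun h _ => step1 h), ← Finset.mul_sum]
    rw [Finset.sum_comm]
    have swap2 : ∀ u ∈ Finset.range N,
        (∑ h ∈ Finset.range N, ∑ v ∈ Finset.range N,
          (g u * (starRingEnd ℂ) (g v)) * Complex.exp (2 * Real.pi * Complex.I * (((v : ℂ) - u) / N) * h))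
        = ∑ v ∈ Finset.range N, (g u * (starRingEnd ℂ) (g v)) *
            ∑ h ∈ Finset.range N, Complex.exp (2 * Real.pi * Complex.I * (((v : ℂ) - u) / N) * h) := by
      intro u _
      rw [Finset.sum_comm]
      exact Finset.sum_congr rfl fun v _ => (Finset.mul_sum _ _ _).symm
    rw [Finset.sum_congr rfl swap2]
    have inner : ∀ u ∈ Finset.range N,
        (∑ v ∈ Finset.range N, (g u * (starRingEnd ℂ) (g v)) *
          ∑ h ∈ Finset.range N, Complex.exp (2 * Real.pi * Complex.I * (((v : ℂ) - u) / N) * h))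
        = (N : ℂ) := by
      intro u hu
      have : ∀ v ∈ Finset.range N, (g u * (starRingEnd ℂ) (g v)) *
          (∑ h ∈ Finset.range N, Complex.exp (2 * Real.pi * Complex.I * (((v : ℂ) - u) / N) * h))
          = if u = v then (g u * (starRingEnd ℂ) (g v)) * N else 0 := by
        intro v hv
        rw [orth N hN u v (Finset.mem_range.mp hu) (Finset.mem_range.mp hv)]
        split <;> simp
      rw [Finset.sum_congr rfl this, Finset.sum_ite_eq, if_pos hu, diag, one_mul]
    rw [Finset.sum_congr rfl inner, Finset.sum_const, Finset.card_range, nsmul_eq_mul]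
    field_simp
  have habs : ∀ h : ℕ, F h * (starRingEnd ℂ) (F h) = ((‖F h‖)^2 : ℝ) := by
    intro h
    rw [Complex.mul_conj]
    norm_cast
    rw [Complex.sq_norm]
  rw [Finset.sum_congr rfl (fun h _ => habs h), ← Complex.ofReal_sum] at key
  have key2 : ∑ h ∈ Finset.range N, (‖F h‖)^2 = 1 := by exact_mod_cast key
  exact key2

private lemma F1_eq (q : ℕ) (f : ℕ → ℂ) (t : ℝ) :
    F1 q f t = (1 / (q : ℂ)) * ∑ u ∈ Finset.range q,
      f u * Complex.exp (2 * Real.pi * Complex.I * ((-(t * u) / (q : ℝ) : ℝ) : ℂ)) := by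
  rw [F1]
  congr 1
  refine Finset.sum_congr rfl fun u _ => ?_
  congr 2
  push_cast
  ring

private lemma abs_F1_le_one (q : ℕ) (hq : 0 < q) (f : ℕ → ℂ)
    (hf1 : ∀ n, ‖f n‖ = 1) (t : ℝ) : ‖F1 q f t‖ ≤ 1 := by
  rw [F1_eq, norm_mul]
  have h1 : ‖∑ u ∈ Finset.range q,
      f u * Complex.exp (2 * Real.pi * Complex.I * ((-(t * u) / (q : ℝ) : ℝ) : ℂ))‖ ≤ q := by
    refine le_trans (norm_sum_le _ _) ?_
    have : ∀ u ∈ Finset.range q, ‖f u * Complex.exp (2 * Real.pi * Complex.I * ((-(t * u) / (q : ℝ) : ℝ) : ℂ))‖ = 1 := by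
      intro u _
      rw [norm_mul, hf1, e_abs, one_mul]
    rw [Finset.sum_congr rfl this, Finset.sum_const, Finset.card_range, nsmul_eq_mul, mul_one]
  have h2 : ‖1/(q:ℂ)‖ = 1/(q:ℝ) := by
    simp [map_div₀]
  rw [h2, div_mul_eq_mul_div, one_mul, div_le_one (by positivity)]
  exact h1

private lemma F1_periodic (q : ℕ) (hq : 0 < q) (f : ℕ → ℂ) (k : ℕ) (t : ℝ) :
    F1 q f ((q : ℝ) * k + t) = F1 q f t := by
  rw [F1_eq, F1_eq]
  congr 1
  refine Finset.sum_congr rfl fun u _ => ?_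
  congr 1
  have hqne : (q : ℝ) ≠ 0 := Nat.cast_ne_zero.mpr hq.ne'
  have harg : (-(((q:ℝ) * k + t) * u) / (q : ℝ)) = (-((k*u : ℕ) : ℝ)) + (-(t*u)/(q:ℝ)) := by
    push_cast
    field_simp
    ring
  rw [harg, Complex.ofReal_add, mul_add, Complex.exp_add]
  have : Complex.exp (2 * Real.pi * Complex.I * ((-((k*u : ℕ) : ℝ) : ℝ) : ℂ)) = 1 := by
    have h0 := Complex.exp_int_mul_two_pi_mul_I (-(k*u : ℕ) : ℤ)
    rw [← h0]
    congr 1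
    push_cast
    ring
  rw [this, one_mul]

private lemma sum_range_sq {M : Type*} [AddCommMonoid M] (q : ℕ) (hq : 0 < q) (G : ℕ → M) :
    ∑ u ∈ Finset.range (q^2), G u = ∑ a ∈ Finset.range q, ∑ b ∈ Finset.range q, G (a*q+b) := by
  rw [← Finset.sum_product']
  refine Finset.sum_nbij' (fun u => (u / q, u % q)) (fun p => p.1 * q + p.2) ?_ ?_ ?_ ?_ ?_
  · intro u hu
    rw [Finset.mem_range, pow_two] at hu
    rw [Finset.mem_product, Finset.mem_range, Finset.mem_range]
    refine ⟨Nat.div_lt_of_lt_mul (by omega), Nat.mod_lt _ hq⟩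
  · intro p hp
    rw [Finset.mem_product, Finset.mem_range, Finset.mem_range] at hp
    rw [Finset.mem_range, pow_two]
    calc p.1 * q + p.2 < p.1 * q + q := by omega
    _ = (p.1 + 1) * q := by ring
    _ ≤ q * q := Nat.mul_le_mul_right _ (by omega)
  · intro u _
    show u / q * q + u % q = u
    exact Nat.div_add_mod' u q
  · intro p hp
    rw [Finset.mem_product, Finset.mem_range, Finset.mem_range] at hp
    show ((p.1 * q + p.2) / q, (p.1 * q + p.2) % q) = p
    have hd : (p.1 * q + p.2) / q = p.1 := by
      rw [mul_comm, Nat.mul_add_div hq, Nat.div_eq_of_lt hp.2, add_zero]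
    have hm : (p.1 * q + p.2) % q = p.2 := by
      rw [mul_comm, Nat.mul_add_mod, Nat.mod_eq_of_lt hp.2]
    rw [hd, hm]
  · intro u _
    show G u = G (u / q * q + u % q)
    rw [Nat.div_add_mod' u q]

private lemma F2_eq (q : ℕ) (hq : 0 < q) (f : ℕ → ℂ)
    (hfm : ∀ a b : ℕ, b < q → f (a * q + b) = f a * f b) (t : ℝ) :
    (1 / (((q^2 : ℕ)):ℂ)) * ∑ u ∈ Finset.range (q^2),
        f u * Complex.exp (2 * Real.pi * Complex.I * ((-(t * u) / ((q^2 : ℕ) : ℝ) : ℝ) : ℂ))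
      = F1 q f t * F1 q f (t / q) := by
  have hqne : (q : ℝ) ≠ 0 := Nat.cast_ne_zero.mpr hq.ne'
  have hqcne : (q : ℂ) ≠ 0 := Nat.cast_ne_zero.mpr hq.ne'
  rw [F1_eq, F1_eq, mul_mul_mul_comm, Finset.sum_mul_sum,
    sum_range_sq q hq (fun u => f u * Complex.exp (2 * Real.pi * Complex.I * ((-(t * u) / ((q^2 : ℕ) : ℝ) : ℝ) : ℂ)))]
  congr 1
  · push_cast
    ring
  refine Finset.sum_congr rfl fun a ha => Finset.sum_congr rfl fun b hb => ?_
  rw [hfm a b (Finset.mem_range.mp hb), mul_mul_mul_comm, ← Complex.exp_add, ← mul_add]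
  congr 2
  push_cast
  field_simp
  ring

/-- For strongly q-multiplicative `f` of modulus 1, with
`c(f) = -log(max_t |F₁(t)F₁(qt)|)/(2 log q)` and
`η(f) = (1/log q) log(max_{0≤t≤1} Σ_{0≤r<q} |F₁(qt+r)|)`, one has `c(f) ≤ η(f)`. -/
theorem cf_le_etaf (q : ℕ) (hq : 2 ≤ q) (f : ℕ → ℂ)
    (hf1 : ∀ n, ‖f n‖ = 1)
    (hfm : ∀ a b : ℕ, b < q → f (a * q + b) = f a * f b)
    (c η : ℝ)
    (hc : c = -Real.log (sSup (Set.range fun t : ℝ =>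
        ‖F1 q f t * F1 q f ((q : ℝ) * t)‖)) / (2 * Real.log q))
    (hη : η = (1 / Real.log q) * Real.log (sSup ((fun t : ℝ =>
        ∑ r ∈ Finset.range q, ‖F1 q f ((q : ℝ) * t + r)‖) '' Set.Icc 0 1))) :
    c ≤ η := by
  have hq0 : 0 < q := by omega
  have hq0R : (0:ℝ) < q := by exact_mod_cast hq0
  have hq1R : (1:ℝ) < q := by exact_mod_cast hq
  have hqne : (q:ℝ) ≠ 0 := hq0R.ne'
  have hlogq : 0 < Real.log q := Real.log_pos hq1R
  set g : ℝ → ℝ := fun t : ℝ => ‖F1 q f t * F1 q f ((q : ℝ) * t)‖ with hgdef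
  set M : ℝ := sSup (Set.range g) with hMdef
  set SS : Set ℝ := (fun t : ℝ =>
      ∑ r ∈ Finset.range q, ‖F1 q f ((q : ℝ) * t + r)‖) '' Set.Icc 0 1 with hSSdef
  set S : ℝ := sSup SS with hSdef
  have habs1 : ∀ t : ℝ, ‖F1 q f t‖ ≤ 1 := abs_F1_le_one q hq0 f hf1
  have hg_le1 : ∀ t : ℝ, g t ≤ 1 := by
    intro t
    show ‖F1 q f t * F1 q f ((q:ℝ)*t)‖ ≤ 1
    rw [norm_mul]
    exact mul_le_one₀ (habs1 t) (norm_nonneg _) (habs1 _)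
  have bddM : BddAbove (Set.range g) := by
    refine ⟨1, ?_⟩
    rintro x ⟨t, rfl⟩
    exact hg_le1 t
  have hMub : ∀ t : ℝ, g t ≤ M := fun t => le_csSup bddM ⟨t, rfl⟩
  have hM1 : M ≤ 1 := csSup_le (Set.range_nonempty g) (by rintro x ⟨t, rfl⟩; exact hg_le1 t)
  have hM0 : 0 ≤ M := le_trans (norm_nonneg _) (hMub 0)
  have hsum_le : ∀ t : ℝ, (∑ r ∈ Finset.range q,
      ‖F1 q f ((q : ℝ) * t + r)‖) ≤ q := by
    intro t
    calc (∑ r ∈ Finset.range q, ‖F1 q f ((q : ℝ) * t + r)‖)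
        ≤ ∑ r ∈ Finset.range q, 1 := Finset.sum_le_sum fun r _ => habs1 _
    _ = q := by simp
  have bddS : BddAbove SS := by
    refine ⟨q, ?_⟩
    rintro x ⟨t, ht, rfl⟩
    exact hsum_le t
  have hSub : ∀ t ∈ Set.Icc (0:ℝ) 1, (∑ r ∈ Finset.range q,
      ‖F1 q f ((q : ℝ) * t + r)‖) ≤ S := by
    intro t ht
    exact le_csSup bddS ⟨t, ht, rfl⟩
  have hS0 : 0 ≤ S := by
    refine le_trans ?_ (hSub 0 (Set.left_mem_Icc.mpr zero_le_one))
    exact Finset.sum_nonneg fun r _ => norm_nonneg _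
  have hSq : S ≤ q := by
    refine csSup_le ⟨_, ⟨0, Set.left_mem_Icc.mpr zero_le_one, rfl⟩⟩ ?_
    rintro x ⟨t, ht, rfl⟩
    exact hsum_le t
  -- Parseval at level q²
  set F₂ : ℕ → ℂ := fun h => (1/(((q^2:ℕ)):ℂ)) * ∑ u ∈ Finset.range (q^2),
      f u * Complex.exp (2 * Real.pi * Complex.I * ((-((h:ℝ) * u) / ((q^2:ℕ):ℝ) : ℝ) : ℂ)) with hF₂
  have P : ∑ h ∈ Finset.range (q^2), (‖F₂ h‖)^2 = 1 :=
    parseval (q^2) (by positivity) f hf1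
  have hF2prod : ∀ h : ℕ, F₂ h = F1 q f (h:ℝ) * F1 q f ((h:ℝ) / q) :=
    fun h => F2_eq q hq0 f hfm (h:ℝ)
  have habsF2 : ∀ h : ℕ, ‖F₂ h‖ ≤ M := by
    intro h
    have harg : (q:ℝ) * ((h:ℝ)/q) = (h:ℝ) := by field_simp
    have : g ((h:ℝ)/q) = ‖F₂ h‖ := by
      show ‖F1 q f ((h:ℝ)/q) * F1 q f ((q:ℝ)*((h:ℝ)/q))‖ = _
      rw [harg, hF2prod h, mul_comm]
    rw [← this]
    exact hMub _
  have key1 : (1:ℝ) ≤ M * ∑ h ∈ Finset.range (q^2), ‖F₂ h‖ := by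
    calc (1:ℝ) = ∑ h ∈ Finset.range (q^2), (‖F₂ h‖)^2 := P.symm
    _ ≤ ∑ h ∈ Finset.range (q^2), M * ‖F₂ h‖ := by
        refine Finset.sum_le_sum fun h _ => ?_
        rw [pow_two]
        exact mul_le_mul_of_nonneg_right (habsF2 h) (norm_nonneg _)
    _ = M * ∑ h ∈ Finset.range (q^2), ‖F₂ h‖ := (Finset.mul_sum _ _ _).symm
  -- the double-sum bound
  have hS1 : (∑ r ∈ Finset.range q, ‖F1 q f (r:ℝ)‖) ≤ S := by
    have h0 := hSub 0 (Set.left_mem_Icc.mpr zero_le_one)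
    simpa using h0
  have hterm : ∀ a ∈ Finset.range q, ∀ b ∈ Finset.range q,
      ‖F₂ (a*q+b)‖ = ‖F1 q f (b:ℝ)‖ *
        ‖F1 q f ((q:ℝ) * ((b:ℝ)/(q:ℝ)^2) + (a:ℝ))‖ := by
    intro a ha b hb
    rw [hF2prod (a*q+b), norm_mul]
    congr 1
    · have e1 : ((a*q+b : ℕ) : ℝ) = (q:ℝ)*(a:ℝ) + (b:ℝ) := by push_cast; ring
      rw [e1, F1_periodic q hq0 f a (b:ℝ)]
    · have e2 : ((a*q+b : ℕ) : ℝ) / (q:ℝ) = (q:ℝ) * ((b:ℝ)/(q:ℝ)^2) + (a:ℝ) := by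
        push_cast
        field_simp
        ring
      rw [e2]
  have key2 : (∑ h ∈ Finset.range (q^2), ‖F₂ h‖) ≤ S * S := by
    rw [sum_range_sq q hq0 (fun h => ‖F₂ h‖)]
    calc (∑ a ∈ Finset.range q, ∑ b ∈ Finset.range q, ‖F₂ (a*q+b)‖)
        = ∑ a ∈ Finset.range q, ∑ b ∈ Finset.range q,
            ‖F1 q f (b:ℝ)‖ *
              ‖F1 q f ((q:ℝ) * ((b:ℝ)/(q:ℝ)^2) + (a:ℝ))‖ := by
          exact Finset.sum_congr rfl fun a ha => Finset.sum_congr rfl fun b hb => hterm a ha b hb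
    _ = ∑ b ∈ Finset.range q, ∑ a ∈ Finset.range q,
            ‖F1 q f (b:ℝ)‖ *
              ‖F1 q f ((q:ℝ) * ((b:ℝ)/(q:ℝ)^2) + (a:ℝ))‖ := Finset.sum_comm
    _ = ∑ b ∈ Finset.range q, ‖F1 q f (b:ℝ)‖ *
          ∑ a ∈ Finset.range q, ‖F1 q f ((q:ℝ) * ((b:ℝ)/(q:ℝ)^2) + (a:ℝ))‖ := by
          exact Finset.sum_congr rfl fun b _ => (Finset.mul_sum _ _ _).symm
    _ ≤ ∑ b ∈ Finset.range q, ‖F1 q f (b:ℝ)‖ * S := by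
          refine Finset.sum_le_sum fun b hb => ?_
          refine mul_le_mul_of_nonneg_left ?_ (norm_nonneg _)
          refine hSub ((b:ℝ)/(q:ℝ)^2) ?_
          constructor
          · positivity
          · rw [div_le_one (by positivity)]
            have hbq : (b:ℝ) < q := by
              exact_mod_cast Finset.mem_range.mp hb
            nlinarith
    _ = (∑ b ∈ Finset.range q, ‖F1 q f (b:ℝ)‖) * S := (Finset.sum_mul _ _ _).symm
    _ ≤ S * S := mul_le_mul_of_nonneg_right hS1 hS0
  have key3 : (1:ℝ) ≤ M * (S * S) :=
    le_trans key1 (mul_le_mul_of_nonneg_left key2 hM0)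
  have hMpos : 0 < M := by
    have h1 : M * (S * S) ≤ M * ((q:ℝ) * q) := by
      refine mul_le_mul_of_nonneg_left ?_ hM0
      nlinarith
    have h2 : (1:ℝ) ≤ M * ((q:ℝ)*q) := le_trans key3 h1
    nlinarith
  have hSpos : 0 < S := by nlinarith
  have hlognn : 0 ≤ Real.log (M * (S * S)) := Real.log_nonneg key3
  rw [Real.log_mul hMpos.ne' (by positivity), Real.log_mul hSpos.ne' hSpos.ne'] at hlognn
  rw [hc, hη]
  rw [div_le_iff₀ (by positivity : (0:ℝ) < 2 * Real.log q)]
  have heq : (1/Real.log q * Real.log S) * (2 * Real.log q) = 2 * Real.log S := by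
    field_simp
  rw [heq]
  linarith
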